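/- arXiv:2511.14955 — 3 statements merged into one kernel-verified Lean document; each statement's English description precedes it below -/
import Mathlib

section
/- Let p, p̂ be two probability vectors over a finite index set of size D, with p sorted so p_1 ≥ ... ≥ p_D. Let K be the set of indices of the k largest entries of p and K̂ a set of indices of k largest entries of p̂ (ties broken arbitrarily). Then |∑_{i∈K} p_i − ∑_{j∈K̂} p_j| ≤ ∑_{i∈K∪K̂} |p_i − p̂_i|. -/
open Finset

lemma stmt7_aux {D : ℕ} {S T : Finset (Fin D)} {f : Fin D → ℝ}
    (hcard : T.card = S.card) (h : ∀ j ∈ T, ∀ i ∈ S, f j ≤ f i) :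
    ∑ j ∈ T, f j ≤ ∑ i ∈ S, f i := by
  rcases S.eq_empty_or_nonempty with hS | hS
  · have : T = ∅ := Finset.card_eq_zero.mp (by simp [hcard, hS])
    simp [this, hS]
  · set m := S.inf' hS f with hm
    calc ∑ j ∈ T, f j ≤ ∑ _j ∈ T, m := by
          refine Finset.sum_le_sum fun j hj => Finset.le_inf' hS f fun i hi => h j hj i hi
      _ = T.card • m := by rw [Finset.sum_const]
      _ = S.card • m := by rw [hcard]
      _ = ∑ _i ∈ S, m := by rw [Finset.sum_const]
      _ ≤ ∑ i ∈ S, f i := Finset.sum_le_sum fun i hi => Finset.inf'_le f hi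

/-- Top-`k` index-set stability: if `p` is sorted decreasingly, `K` is a set of
indices of `k` largest entries of `p` and `K̂` of `k` largest entries of `p̂`, then
`|∑_{i∈K} p_i − ∑_{j∈K̂} p_j| ≤ ∑_{i∈K∪K̂} |p_i − p̂_i|`. -/
theorem stmt_7 (D k : ℕ) (p phat : Fin D → ℝ)
    (hp0 : ∀ i, 0 ≤ p i) (hp1 : ∑ i, p i = 1)
    (hphat0 : ∀ i, 0 ≤ phat i) (hphat1 : ∑ i, phat i = 1)
    (hsorted : ∀ i j : Fin D, i ≤ j → p j ≤ p i)
    (K Khat : Finset (Fin D)) (hK : K.card = k) (hKhat : Khat.card = k)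
    (htopK : ∀ i ∈ K, ∀ j ∉ K, p j ≤ p i)
    (htopKhat : ∀ i ∈ Khat, ∀ j ∉ Khat, phat j ≤ phat i) :
    |∑ i ∈ K, p i - ∑ j ∈ Khat, p j| ≤ ∑ i ∈ K ∪ Khat, |p i - phat i| := by
  set A := K \ Khat with hA
  set B := Khat \ K with hB
  have hcardAB : A.card = B.card := by
    have h1 : (K ∩ Khat).card + A.card = K.card := Finset.card_inter_add_card_sdiff K Khat
    have h2 : (Khat ∩ K).card + B.card = Khat.card := Finset.card_inter_add_card_sdiff Khat K
    rw [Finset.inter_comm] at h2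
    omega
  have hdiff : ∀ f : Fin D → ℝ, ∑ i ∈ K, f i - ∑ j ∈ Khat, f j
      = ∑ i ∈ A, f i - ∑ j ∈ B, f j := by
    intro f
    have h1 : ∑ i ∈ K ∩ Khat, f i + ∑ i ∈ A, f i = ∑ i ∈ K, f i :=
      Finset.sum_inter_add_sum_sdiff K Khat f
    have h2 : ∑ i ∈ Khat ∩ K, f i + ∑ i ∈ B, f i = ∑ i ∈ Khat, f i :=
      Finset.sum_inter_add_sum_sdiff Khat K f
    rw [Finset.inter_comm] at h2
    linarith
  have hdisj : Disjoint A B := disjoint_sdiff_sdiff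
  have hsub : A ∪ B ⊆ K ∪ Khat := by
    apply Finset.union_subset
    · exact (Finset.sdiff_subset).trans Finset.subset_union_left
    · exact (Finset.sdiff_subset).trans Finset.subset_union_right
  have habs : ∑ i ∈ A, |p i - phat i| + ∑ i ∈ B, |p i - phat i|
      ≤ ∑ i ∈ K ∪ Khat, |p i - phat i| := by
    rw [← Finset.sum_union hdisj]
    exact Finset.sum_le_sum_of_subset_of_nonneg hsub (fun i _ _ => abs_nonneg _)
  rw [abs_le]
  constructor
  · -- lower bound: ∑_B p ≤ ∑_A p
    have h1 : ∑ j ∈ B, p j ≤ ∑ i ∈ A, p i := by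
      refine stmt7_aux hcardAB.symm fun j hj i hi => ?_
      exact htopK i (Finset.mem_sdiff.mp hi).1 j (Finset.mem_sdiff.mp hj).2
    have h2 : (0:ℝ) ≤ ∑ i ∈ K ∪ Khat, |p i - phat i| :=
      Finset.sum_nonneg fun i _ => abs_nonneg _
    rw [hdiff]
    linarith
  · -- upper bound
    have hphatle : ∑ i ∈ A, phat i ≤ ∑ j ∈ B, phat j := by
      refine stmt7_aux hcardAB fun i hi j hj => ?_
      exact htopKhat j (Finset.mem_sdiff.mp hj).1 i (Finset.mem_sdiff.mp hi).2
    have hAle : ∑ i ∈ A, (p i - phat i) ≤ ∑ i ∈ A, |p i - phat i| :=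
      Finset.sum_le_sum fun i _ => le_abs_self _
    have hBle : ∑ i ∈ B, (phat i - p i) ≤ ∑ i ∈ B, |p i - phat i| :=
      Finset.sum_le_sum fun i _ => (abs_sub_comm (p i) (phat i)) ▸ le_abs_self _
    rw [hdiff]
    have := Finset.sum_sub_distrib (s := A) (f := p) (g := phat)
    simp only [Finset.sum_sub_distrib] at hAle hBle
    linarith
end

section
/- Let p, p̂ be probability vectors over a finite set of size D, K the index set of the top k entries of p, K̂ the index set of the top k entries of p̂. Then |∑_{i∈K̂} p̂_i − ∑_{i∈K} p_i| ≤ 2 ∑_{i∈K∪K̂} |p̂_i − p_i| ≤ 4k · max_{1≤i≤D} |p̂_i − p_i|. -/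
open Finset

/-- Deterministic top-`k` stability bound:
`|∑_{K̂} p̂ − ∑_K p| ≤ 2 ∑_{K∪K̂} |p̂ − p| ≤ 4 k max_i |p̂_i − p_i|`. -/
theorem stmt_8 (D k : ℕ) (hD : 0 < D) (p phat : Fin D → ℝ)
    (hp0 : ∀ i, 0 ≤ p i) (hp1 : ∑ i, p i = 1)
    (hphat0 : ∀ i, 0 ≤ phat i) (hphat1 : ∑ i, phat i = 1)
    (K Khat : Finset (Fin D)) (hK : K.card = k) (hKhat : Khat.card = k)
    (htopK : ∀ i ∈ K, ∀ j ∉ K, p j ≤ p i)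
    (htopKhat : ∀ i ∈ Khat, ∀ j ∉ Khat, phat j ≤ phat i) :
    |∑ i ∈ Khat, phat i - ∑ i ∈ K, p i| ≤ 2 * ∑ i ∈ K ∪ Khat, |phat i - p i| ∧
      2 * ∑ i ∈ K ∪ Khat, |phat i - p i| ≤
        4 * k * (Finset.univ.sup' (univ_nonempty_iff.mpr ⟨⟨0, hD⟩⟩)
          (fun i => |phat i - p i|)) := by
  set S := ∑ i ∈ K ∪ Khat, |phat i - p i| with hS
  -- card equality
  have hc : (K \ Khat).card = (Khat \ K).card := by
    have h1 : (K \ Khat).card + (K ∩ Khat).card = K.card := Finset.card_sdiff_add_card_inter K Khat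
    have h2 : (Khat \ K).card + (Khat ∩ K).card = Khat.card := Finset.card_sdiff_add_card_inter Khat K
    rw [Finset.inter_comm] at h2
    omega
  let e : (K \ Khat : Finset (Fin D)) ≃ (Khat \ K : Finset (Fin D)) := Finset.equivOfCardEq hc
  -- A bound
  have hA : |∑ i ∈ Khat, phat i - ∑ i ∈ Khat, p i| ≤ S := by
    rw [← Finset.sum_sub_distrib]
    refine (Finset.abs_sum_le_sum_abs _ _).trans ?_
    exact Finset.sum_le_sum_of_subset_of_nonneg Finset.subset_union_right
      (fun i _ _ => abs_nonneg _)
  -- B facts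
  have hsd : ∑ i ∈ Khat \ K, p i - ∑ i ∈ K \ Khat, p i
      = ∑ i ∈ Khat, p i - ∑ i ∈ K, p i := Finset.sum_sdiff_sub_sum_sdiff ..
  have hse : ∑ i ∈ Khat \ K, p i = ∑ y : (K \ Khat : Finset (Fin D)), p (e y) := by
    rw [← Finset.sum_coe_sort (Khat \ K) p]
    exact (Equiv.sum_comp e (fun x => p (x : Fin D))).symm
  have hyK : ∀ y : (K \ Khat : Finset (Fin D)), (y : Fin D) ∈ K ∧ (y : Fin D) ∉ Khat :=
    fun y => Finset.mem_sdiff.mp y.2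
  have heK : ∀ y : (K \ Khat : Finset (Fin D)), ((e y : Fin D)) ∈ Khat ∧ (e y : Fin D) ∉ K :=
    fun y => Finset.mem_sdiff.mp (e y).2
  have hB0 : ∑ i ∈ Khat, p i - ∑ i ∈ K, p i ≤ 0 := by
    rw [← hsd, hse, ← Finset.sum_coe_sort (K \ Khat) p, sub_nonpos]
    exact Finset.sum_le_sum (fun y _ => htopK y (hyK y).1 (e y) (heK y).2)
  have hB1 : ∑ i ∈ K, p i - ∑ i ∈ Khat, p i ≤ S := by
    have key : ∀ y : (K \ Khat : Finset (Fin D)),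
        p y - p (e y) ≤ |phat (y : Fin D) - p y| + |phat (e y : Fin D) - p (e y)| := by
      intro y
      have h1 : phat (y : Fin D) ≤ phat (e y : Fin D) :=
        htopKhat (e y) (heK y).1 y (hyK y).2
      have h2 : p (y : Fin D) - phat (y : Fin D) ≤ |phat (y : Fin D) - p y| := by
        rw [abs_sub_comm]; exact le_abs_self _
      have h3 : phat (e y : Fin D) - p (e y : Fin D) ≤ |phat (e y : Fin D) - p (e y)| :=
        le_abs_self _
      linarith
    have h4 : ∑ i ∈ K, p i - ∑ i ∈ Khat, p i
        = ∑ y : (K \ Khat : Finset (Fin D)), (p y - p (e y)) := by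
      rw [Finset.sum_sub_distrib, ← hse, Finset.sum_coe_sort (K \ Khat) p]
      linarith [hsd]
    rw [h4]
    refine (Finset.sum_le_sum (fun y _ => key y)).trans ?_
    rw [Finset.sum_add_distrib]
    have h5 : ∑ y : (K \ Khat : Finset (Fin D)), |phat (y : Fin D) - p y|
        = ∑ i ∈ K \ Khat, |phat i - p i| := Finset.sum_coe_sort (K \ Khat) (fun i => |phat i - p i|)
    have h6 : ∑ y : (K \ Khat : Finset (Fin D)), |phat (e y : Fin D) - p (e y)|
        = ∑ i ∈ Khat \ K, |phat i - p i| := by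
      rw [← Finset.sum_coe_sort (Khat \ K) (fun i => |phat i - p i|)]
      exact Equiv.sum_comp e (fun x => |phat (x : Fin D) - p (x : Fin D)|)
    rw [h5, h6]
    have hdisj : Disjoint (K \ Khat) (Khat \ K) := disjoint_sdiff_sdiff
    rw [← Finset.sum_union hdisj]
    refine Finset.sum_le_sum_of_subset_of_nonneg ?_ (fun i _ _ => abs_nonneg _)
    intro x hx
    rcases Finset.mem_union.mp hx with h | h
    · exact Finset.mem_union_left _ (Finset.mem_sdiff.mp h).1
    · exact Finset.mem_union_right _ (Finset.mem_sdiff.mp h).1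
  constructor
  · have : ∑ i ∈ Khat, phat i - ∑ i ∈ K, p i
        = (∑ i ∈ Khat, phat i - ∑ i ∈ Khat, p i) + (∑ i ∈ Khat, p i - ∑ i ∈ K, p i) := by ring
    rw [this, abs_le]
    rw [abs_le] at hA
    constructor <;> linarith
  · set M := Finset.univ.sup' (univ_nonempty_iff.mpr ⟨⟨0, hD⟩⟩) (fun i => |phat i - p i|) with hM
    have hMle : ∀ i : Fin D, |phat i - p i| ≤ M :=
      fun i => Finset.le_sup' (fun i => |phat i - p i|) (Finset.mem_univ i)
    have hM0 : 0 ≤ M := le_trans (abs_nonneg _) (hMle ⟨0, hD⟩)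
    have hcard : (K ∪ Khat).card ≤ 2 * k := by
      have := Finset.card_union_le K Khat
      omega
    have : S ≤ (K ∪ Khat).card * M := by
      calc S ≤ ∑ _i ∈ K ∪ Khat, M := Finset.sum_le_sum (fun i _ => hMle i)
        _ = (K ∪ Khat).card * M := by rw [Finset.sum_const, nsmul_eq_mul]
    have h2 : ((K ∪ Khat).card : ℝ) * M ≤ (2 * k : ℕ) * M := by
      apply mul_le_mul_of_nonneg_right _ hM0
      exact_mod_cast hcard
    push_cast at h2
    nlinarith
end

section
/- Let X be a multinomial sample of size N over D categories with probabilities p_1 ≥ ... ≥ p_D, empirical frequencies p̂_i = X_i/N, and let p̂_{(1)} ≥ ... ≥ p̂_{(D)} be the empirical frequencies in decreasing order. For any δ > 0, with probability at least 1 − δ, |∑_{i=1}^k p̂_{(i)} − ∑_{i=1}^k p_i| ≤ 4√(k² ln(2D/δ)/(2N)). -/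
open MeasureTheory Finset
open scoped ProbabilityTheory



lemma exp_neg_le_quad {t : ℝ} (ht : 0 ≤ t) : Real.exp (-t) ≤ 1 - t + t ^ 2 := by
  have h1 : t + 1 ≤ Real.exp t := Real.add_one_le_exp t
  have h2 : Real.exp (-t) * (1 + t) ≤ 1 := by
    calc Real.exp (-t) * (1 + t) ≤ Real.exp (-t) * Real.exp t :=
          mul_le_mul_of_nonneg_left (by linarith) (Real.exp_nonneg _)
      _ = 1 := by rw [← Real.exp_add]; simp
  nlinarith [Real.exp_nonneg (-t), pow_nonneg ht 3, sq_nonneg t]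

lemma top_sum_le {D k : ℕ} (hk : 1 ≤ k) (hkD : k ≤ D) (p : Fin D → ℝ)
    (hsorted : ∀ i j : Fin D, i ≤ j → p j ≤ p i)
    (K : Finset (Fin D)) (hK : K.card = k) :
    ∑ i ∈ K, p i ≤ ∑ i ∈ Finset.univ.filter (fun i : Fin D => i.val < k), p i := by
  classical
  set K0 := Finset.univ.filter (fun i : Fin D => i.val < k) with hK0
  have hK0card : K0.card = k := by
    have himg : K0 = Finset.image (Fin.castLE hkD) Finset.univ := by
      ext x
      simp only [hK0, mem_filter, mem_univ, true_and, mem_image]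
      constructor
      · intro hx; exact ⟨⟨x.val, hx⟩, rfl⟩
      · rintro ⟨y, -, rfl⟩; exact y.2
    rw [himg, Finset.card_image_of_injective _ (Fin.castLE_injective hkD), card_univ,
      Fintype.card_fin]
  have hkm : k - 1 < D := lt_of_lt_of_le (Nat.sub_lt hk one_pos) hkD
  set c : ℝ := p ⟨k - 1, hkm⟩ with hc
  have hcards : (K \ K0).card = (K0 \ K).card := by
    have h1 := Finset.card_sdiff_add_card_inter K K0
    have h2 := Finset.card_sdiff_add_card_inter K0 K
    rw [Finset.inter_comm] at h2
    omega
  have h1 : ∑ i ∈ K \ K0, p i ≤ (K \ K0).card • c := by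
    refine Finset.sum_le_card_nsmul _ _ _ (fun x hx => ?_)
    rw [Finset.mem_sdiff, hK0, mem_filter] at hx
    refine hsorted _ _ ?_
    simp only [Fin.le_def, Fin.val_mk]
    simp only [mem_univ, true_and] at hx
    omega
  have h2 : (K0 \ K).card • c ≤ ∑ i ∈ K0 \ K, p i := by
    refine Finset.card_nsmul_le_sum _ _ _ (fun x hx => ?_)
    rw [Finset.mem_sdiff, hK0, mem_filter] at hx
    refine hsorted _ _ ?_
    simp only [Fin.le_def, Fin.val_mk]
    simp only [mem_univ, true_and] at hx
    omega
  have e1 := Finset.sum_inter_add_sum_sdiff K K0 p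
  have e2 := Finset.sum_inter_add_sum_sdiff K0 K p
  rw [Finset.inter_comm] at e2
  rw [hcards] at h1
  simp only [nsmul_eq_mul] at h1 h2
  linarith

lemma det_topk {D k : ℕ} (hk : 1 ≤ k) (hkD : k ≤ D)
    (hne : (Finset.univ.powersetCard k (α := Fin D)).Nonempty)
    (p q : Fin D → ℝ)
    (hsorted : ∀ i j : Fin D, i ≤ j → p j ≤ p i) {ε : ℝ}
    (hclose : ∀ i, |q i - p i| ≤ ε) :
    |((Finset.univ.powersetCard k).sup' hne (fun K => ∑ i ∈ K, q i)) -
      ∑ i ∈ Finset.univ.filter (fun i : Fin D => i.val < k), p i| ≤ k * ε := by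
  classical
  set K0 := Finset.univ.filter (fun i : Fin D => i.val < k) with hK0
  have hK0card : K0.card = k := by
    have h := top_sum_le hk hkD p hsorted
    -- recompute card directly
    have himg : K0 = Finset.image (Fin.castLE hkD) Finset.univ := by
      ext x
      simp only [hK0, mem_filter, mem_univ, true_and, mem_image]
      constructor
      · intro hx; exact ⟨⟨x.val, hx⟩, rfl⟩
      · rintro ⟨y, -, rfl⟩; exact y.2
    rw [himg, Finset.card_image_of_injective _ (Fin.castLE_injective hkD), card_univ,
      Fintype.card_fin]
  have hK0mem : K0 ∈ Finset.univ.powersetCard k :=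
    Finset.mem_powersetCard.mpr ⟨Finset.subset_univ _, hK0card⟩
  have habs : ∀ K ∈ Finset.univ.powersetCard k, |∑ i ∈ K, q i - ∑ i ∈ K, p i| ≤ k * ε := by
    intro K hK
    have hKcard : K.card = k := (Finset.mem_powersetCard.mp hK).2
    rw [← Finset.sum_sub_distrib]
    calc |∑ i ∈ K, (q i - p i)| ≤ ∑ i ∈ K, |q i - p i| := Finset.abs_sum_le_sum_abs _ _
      _ ≤ K.card • ε := Finset.sum_le_card_nsmul _ _ _ (fun x _ => hclose x)
      _ = k * ε := by rw [hKcard, nsmul_eq_mul]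
  have hupper : (Finset.univ.powersetCard k).sup' hne (fun K => ∑ i ∈ K, q i) ≤
      ∑ i ∈ K0, p i + k * ε := by
    refine Finset.sup'_le _ _ (fun K hK => ?_)
    have h1 := habs K hK
    have h2 := top_sum_le hk hkD p hsorted K (Finset.mem_powersetCard.mp hK).2
    rw [abs_le] at h1
    linarith [h1.2]
  have hlower : ∑ i ∈ K0, p i - k * ε ≤
      (Finset.univ.powersetCard k).sup' hne (fun K => ∑ i ∈ K, q i) := by
    have h1 := habs K0 hK0mem
    rw [abs_le] at h1
    have h2 := Finset.le_sup' (fun K => ∑ i ∈ K, q i) hK0mem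
    beta_reduce at h2
    linarith [h1.1]
  rw [abs_le]
  constructor <;> linarith


lemma exp_neg_le_quad' {t : ℝ} (ht : 0 ≤ t) : Real.exp (-t) ≤ 1 - t + t ^ 2 := by
  have h1 : t + 1 ≤ Real.exp t := Real.add_one_le_exp t
  have h2 : Real.exp (-t) * (1 + t) ≤ 1 := by
    calc Real.exp (-t) * (1 + t) ≤ Real.exp (-t) * Real.exp t :=
          mul_le_mul_of_nonneg_left (by linarith) (Real.exp_nonneg _)
      _ = 1 := by rw [← Real.exp_add]; simp
  nlinarith [Real.exp_nonneg (-t), pow_nonneg ht 3, sq_nonneg t]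

lemma bernoulli_mgf_le {Ω : Type*} [MeasureSpace Ω] [IsProbabilityMeasure (ℙ : Measure Ω)]
    {r t : ℝ} (hr0 : 0 ≤ r) (hr1 : r ≤ 1) (ht : 0 ≤ t)
    (M : Set Ω) (hM : MeasurableSet M) (hMr : (ℙ M).toReal = r) :
    ProbabilityTheory.mgf (fun ω => r - M.indicator (fun _ => (1 : ℝ)) ω) ℙ t ≤
      Real.exp (t ^ 2) := by
  have hcompl : (ℙ Mᶜ).toReal = 1 - r := by
    rw [measure_compl hM (measure_ne_top _ _), measure_univ,
      ENNReal.toReal_sub_of_le prob_le_one ENNReal.one_ne_top, ENNReal.toReal_one, hMr]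
  have heq : (fun ω => Real.exp (t * (r - M.indicator (fun _ => (1 : ℝ)) ω))) =
      fun ω => M.indicator (fun _ => Real.exp (t * (r - 1))) ω +
        Mᶜ.indicator (fun _ => Real.exp (t * r)) ω := by
    funext ω
    by_cases h : ω ∈ M <;> simp [Set.indicator, h]
  have hmgf_eq : ProbabilityTheory.mgf (fun ω => r - M.indicator (fun _ => (1 : ℝ)) ω) ℙ t =
      r * Real.exp (t * (r - 1)) + (1 - r) * Real.exp (t * r) := by
    rw [ProbabilityTheory.mgf, heq, integral_add
        ((integrable_const _).indicator hM) ((integrable_const _).indicator hM.compl),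
      integral_indicator_const _ hM, integral_indicator_const _ hM.compl, measureReal_def, measureReal_def, hMr, hcompl,
      smul_eq_mul, smul_eq_mul]

  rw [hmgf_eq]
  have hu0 : 0 ≤ Real.exp (-t) - 1 + t := by
    have := Real.add_one_le_exp (-t); linarith
  have hu1 : Real.exp (-t) - 1 + t ≤ t ^ 2 := by
    have := exp_neg_le_quad' ht; linarith
  have key : r * Real.exp (-t) + (1 - r) ≤ Real.exp (t ^ 2 - t * r) := by
    have h2 : r * (Real.exp (-t) - 1) + 1 ≤ Real.exp (r * (Real.exp (-t) - 1)) :=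
      Real.add_one_le_exp _
    have h3 : r * (Real.exp (-t) - 1) ≤ t ^ 2 - t * r := by nlinarith
    calc r * Real.exp (-t) + (1 - r) = r * (Real.exp (-t) - 1) + 1 := by ring
      _ ≤ Real.exp (r * (Real.exp (-t) - 1)) := h2
      _ ≤ Real.exp (t ^ 2 - t * r) := Real.exp_le_exp.mpr h3
  calc r * Real.exp (t * (r - 1)) + (1 - r) * Real.exp (t * r)
      = Real.exp (t * r) * (r * Real.exp (-t) + (1 - r)) := by
        rw [show t * (r - 1) = t * r + (-t) by ring, Real.exp_add]; ring
    _ ≤ Real.exp (t * r) * Real.exp (t ^ 2 - t * r) :=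
        mul_le_mul_of_nonneg_left key (Real.exp_nonneg _)
    _ = Real.exp (t ^ 2) := by rw [← Real.exp_add]; ring_nf

lemma tail_bound {Ω : Type*} [MeasureSpace Ω] [IsProbabilityMeasure (ℙ : Measure Ω)]
    {D N : ℕ} (hN : 0 < N) (Y : Fin N → Ω → Fin D) (hmeas : ∀ j, Measurable (Y j))
    (hindep : ProbabilityTheory.iIndepFun Y ℙ)
    (S : Finset (Fin D)) (r : ℝ) (hr : ∀ j, (ℙ {ω | Y j ω ∈ S}).toReal = r)
    (t a : ℝ) (ht : 0 ≤ t) :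
    ℙ {ω | (N : ℝ) * a ≤ ∑ j, (r - if Y j ω ∈ S then (1 : ℝ) else 0)} ≤
      ENNReal.ofReal (Real.exp (-t * ((N : ℝ) * a)) * Real.exp ((N : ℝ) * t ^ 2)) := by
  classical
  set f : Fin D → ℝ := fun i => r - if i ∈ S then 1 else 0 with hf
  set X : Fin N → Ω → ℝ := fun j => f ∘ Y j with hX
  have hfm : Measurable f := Measurable.of_discrete
  have hXmeas : ∀ j, Measurable (X j) := fun j => hfm.comp (hmeas j)
  have hXindep : ProbabilityTheory.iIndepFun X ℙ :=
    hindep.comp (fun _ => f) (fun _ => hfm)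
  have hr0 : 0 ≤ r := (hr ⟨0, hN⟩) ▸ ENNReal.toReal_nonneg
  have hr1 : r ≤ 1 := by
    rw [← (hr ⟨0, hN⟩)]
    exact le_trans (ENNReal.toReal_mono ENNReal.one_ne_top prob_le_one) (by simp)
  have hXbd : ∀ j ω, |X j ω| ≤ |r| + 1 := by
    intro j ω
    simp only [hX, hf, Function.comp_apply]
    by_cases h : Y j ω ∈ S <;> simp [h] <;> cases abs_cases r <;> cases abs_cases (r - 1) <;>
      linarith
  have hint : ∀ j, Integrable (fun ω => Real.exp (t * X j ω)) ℙ := by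
    intro j
    refine Integrable.mono' (integrable_const (Real.exp (t * (|r| + 1))))
      (((hXmeas j).const_mul t).exp.aestronglyMeasurable) (ae_of_all _ fun ω => ?_)
    rw [Real.norm_eq_abs, abs_of_nonneg (Real.exp_nonneg _)]
    refine Real.exp_le_exp.mpr ?_
    calc t * X j ω ≤ |t * X j ω| := le_abs_self _
      _ = t * |X j ω| := by rw [abs_mul, abs_of_nonneg ht]
      _ ≤ t * (|r| + 1) := mul_le_mul_of_nonneg_left (hXbd j ω) ht
  have hmgf : ∀ j, ProbabilityTheory.mgf (X j) ℙ t ≤ Real.exp (t ^ 2) := by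
    intro j
    have hMset : MeasurableSet {ω | Y j ω ∈ S} := (hmeas j) MeasurableSet.of_discrete
    have hXj : X j = fun ω => r - Set.indicator {ω | Y j ω ∈ S} (fun _ => (1 : ℝ)) ω := by
      funext ω
      by_cases h : Y j ω ∈ S <;> simp [hX, hf, Set.indicator, h]
    rw [hXj]
    exact bernoulli_mgf_le hr0 hr1 ht _ hMset (hr j)
  have hintsum : Integrable (fun ω => Real.exp (t * (∑ j, X j) ω)) ℙ :=
    hXindep.integrable_exp_mul_sum hXmeas (fun j _ => hint j)
  have hchern := ProbabilityTheory.measure_ge_le_exp_mul_mgf (X := ∑ j, X j)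
    ((N : ℝ) * a) ht hintsum
  have hmgfsum : ProbabilityTheory.mgf (∑ j, X j) ℙ t ≤ Real.exp ((N : ℝ) * t ^ 2) := by
    rw [hXindep.mgf_sum hXmeas Finset.univ]
    calc ∏ j : Fin N, ProbabilityTheory.mgf (X j) ℙ t ≤ ∏ _j : Fin N, Real.exp (t ^ 2) :=
        Finset.prod_le_prod (fun j _ => ProbabilityTheory.mgf_nonneg) (fun j _ => hmgf j)
      _ = Real.exp ((N : ℝ) * t ^ 2) := by
        rw [Finset.prod_const, Real.exp_nat_mul, Finset.card_univ, Fintype.card_fin]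
  have hEset : {ω | (N : ℝ) * a ≤ ∑ j, (r - if Y j ω ∈ S then (1 : ℝ) else 0)} =
      {ω | (N : ℝ) * a ≤ (∑ j, X j) ω} := by
    ext ω
    simp only [Set.mem_setOf_eq, Finset.sum_apply, hX, hf, Function.comp_apply]
  rw [hEset, ← ENNReal.ofReal_toReal (measure_ne_top ℙ _)]
  exact ENNReal.ofReal_le_ofReal
    (le_trans hchern (mul_le_mul_of_nonneg_left hmgfsum (Real.exp_nonneg _)))

/-- Concentration of the empirical top-`k` mass for a multinomial sample. Model the
multinomial as counts of `N` i.i.d. category draws `Y j : Ω → Fin D` with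
`ℙ(Y j = i) = p i`, and `p` sorted decreasingly so the true top-`k` mass is
`∑_{i < k} p i`. The empirical top-`k` mass `∑_{i=1}^k p̂_{(i)}` is the largest sum
of empirical frequencies over `k`-element index sets. For any `δ > 0`, with
probability at least `1 - δ`,
`|∑_{i=1}^k p̂_{(i)} − ∑_{i=1}^k p_i| ≤ 4 √(k² ln(2D/δ)/(2N))`. -/
theorem stmt_10 {Ω : Type*} [MeasureSpace Ω] [IsProbabilityMeasure (ℙ : Measure Ω)]
    (D N k : ℕ) (hD : 0 < D) (hN : 0 < N) (hk : 1 ≤ k) (hkD : k ≤ D)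
    (p : Fin D → ℝ) (hp0 : ∀ i, 0 ≤ p i) (hp1 : ∑ i, p i = 1)
    (hsorted : ∀ i j : Fin D, i ≤ j → p j ≤ p i)
    (Y : Fin N → Ω → Fin D) (hmeas : ∀ j, Measurable (Y j))
    (hindep : ProbabilityTheory.iIndepFun Y ℙ)
    (hlaw : ∀ j i, (ℙ {ω | Y j ω = i}).toReal = p i)
    (δ : ℝ) (hδ : 0 < δ) :
    ENNReal.ofReal (1 - δ) ≤
      ℙ {ω |
        |((Finset.univ.powersetCard k).sup'
              (Finset.powersetCard_nonempty.mpr (by simpa using hkD))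
              (fun K => ∑ i ∈ K,
                ((Finset.univ.filter (fun j => Y j ω = i)).card : ℝ) / N)) -
            ∑ i ∈ Finset.univ.filter (fun i : Fin D => i.val < k), p i| ≤
          4 * Real.sqrt ((k : ℝ) ^ 2 * Real.log (2 * D / δ) / (2 * N))} := by
  classical
  by_cases hδ1 : 1 ≤ δ
  · rw [ENNReal.ofReal_of_nonpos (by linarith)]
    exact zero_le'
  push_neg at hδ1
  set L := Real.log (2 * D / δ) with hLdef
  have hD0 : (0:ℝ) < D := by exact_mod_cast hD
  have hNpos : (0:ℝ) < N := by exact_mod_cast hN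
  have hq : (1:ℝ) < 2 * D / δ := by
    rw [lt_div_iff₀ hδ]
    have hD1 : (1:ℝ) ≤ D := by exact_mod_cast hD
    linarith
  have hL : 0 < L := Real.log_pos hq
  set t := Real.sqrt (L / N) with htdef
  have ht0 : 0 ≤ t := Real.sqrt_nonneg _
  have ht2 : t ^ 2 = L / N := Real.sq_sqrt (by positivity)
  set ε' := 2 * t with hε'def
  -- the exponential bound value
  have hexp : Real.exp (-t * ((N:ℝ) * ε')) * Real.exp ((N:ℝ) * t ^ 2) = δ / (2 * D) := by
    have hNt2 : (N:ℝ) * t ^ 2 = L := by rw [ht2]; field_simp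
    have h2 : -t * ((N:ℝ) * ε') = -(2*L) := by
      rw [hε'def, show -t * ((N:ℝ) * (2*t)) = -(2 * ((N:ℝ) * t^2)) by ring, hNt2]
    rw [h2, hNt2, ← Real.exp_add, show -(2*L) + L = -L by ring, Real.exp_neg,
      Real.exp_log (by positivity : (0:ℝ) < 2*D/δ), inv_div]
  -- the bad events
  have hmeasSet : ∀ (c : ℝ) (S : Finset (Fin D)),
      MeasurableSet {ω | (N:ℝ) * ε' ≤ ∑ j, (c - if Y j ω ∈ S then (1:ℝ) else 0)} := by
    intro c S
    refine measurableSet_le measurable_const ?_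
    exact Finset.measurable_sum _ (fun j _ =>
      (Measurable.of_discrete (f := fun x : Fin D => c - if x ∈ S then (1:ℝ) else 0)).comp
        (hmeas j))
  set Bad : Set Ω := ⋃ i : Fin D,
    ({ω | (N:ℝ) * ε' ≤ ∑ j, (p i - if Y j ω ∈ ({i} : Finset (Fin D)) then (1:ℝ) else 0)} ∪
     {ω | (N:ℝ) * ε' ≤ ∑ j, ((1 - p i) - if Y j ω ∈ ({i}ᶜ : Finset (Fin D)) then (1:ℝ) else 0)})
    with hBad
  have hBadMeas : MeasurableSet Bad :=
    MeasurableSet.iUnion (fun i => (hmeasSet _ _).union (hmeasSet _ _))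
  have hLbound : ∀ i : Fin D,
      ℙ {ω | (N:ℝ) * ε' ≤ ∑ j, (p i - if Y j ω ∈ ({i} : Finset (Fin D)) then (1:ℝ) else 0)} ≤
        ENNReal.ofReal (δ / (2*D)) := by
    intro i
    have hr : ∀ j, (ℙ {ω | Y j ω ∈ ({i} : Finset (Fin D))}).toReal = p i := by
      intro j; simp only [Finset.mem_singleton]; exact hlaw j i
    have h := tail_bound hN Y hmeas hindep {i} (p i) hr t ε' ht0
    rwa [hexp] at h
  have hUbound : ∀ i : Fin D,
      ℙ {ω | (N:ℝ) * ε' ≤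
          ∑ j, ((1 - p i) - if Y j ω ∈ ({i}ᶜ : Finset (Fin D)) then (1:ℝ) else 0)} ≤
        ENNReal.ofReal (δ / (2*D)) := by
    intro i
    have hr : ∀ j, (ℙ {ω | Y j ω ∈ ({i}ᶜ : Finset (Fin D))}).toReal = 1 - p i := by
      intro j
      have hset : {ω | Y j ω ∈ ({i}ᶜ : Finset (Fin D))} = {ω | Y j ω = i}ᶜ := by
        ext ω; simp
      have hms : MeasurableSet {ω | Y j ω = i} := (hmeas j) (MeasurableSet.of_discrete (s := {x | x = i}))
      rw [hset, measure_compl hms (measure_ne_top _ _),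
        measure_univ, ENNReal.toReal_sub_of_le prob_le_one ENNReal.one_ne_top,
        ENNReal.toReal_one, hlaw j i]
    have h := tail_bound hN Y hmeas hindep ({i}ᶜ) (1 - p i) hr t ε' ht0
    rwa [hexp] at h
  have hBadLe : ℙ Bad ≤ ENNReal.ofReal δ := by
    calc ℙ Bad ≤ ∑ i : Fin D, ℙ _ := measure_iUnion_fintype_le _ _
      _ ≤ ∑ _i : Fin D, (ENNReal.ofReal (δ/(2*D)) + ENNReal.ofReal (δ/(2*D))) :=
          Finset.sum_le_sum (fun i _ => le_trans (measure_union_le _ _)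
            (add_le_add (hLbound i) (hUbound i)))
      _ = ENNReal.ofReal δ := by
        rw [Finset.sum_const, Finset.card_univ, Fintype.card_fin,
          ← ENNReal.ofReal_add (by positivity) (by positivity), nsmul_eq_mul,
          ← ENNReal.ofReal_natCast D, ← ENNReal.ofReal_mul (by positivity)]
        congr 1
        field_simp
        ring
  -- inclusion of the complement in the good event
  have hsub : Badᶜ ⊆ {ω |
        |((Finset.univ.powersetCard k).sup'
              (Finset.powersetCard_nonempty.mpr (by simpa using hkD))
              (fun K => ∑ i ∈ K,
                ((Finset.univ.filter (fun j => Y j ω = i)).card : ℝ) / N)) -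
            ∑ i ∈ Finset.univ.filter (fun i : Fin D => i.val < k), p i| ≤
          4 * Real.sqrt ((k : ℝ) ^ 2 * Real.log (2 * D / δ) / (2 * N))} := by
    intro ω hω
    simp only [hBad, Set.mem_compl_iff, Set.mem_iUnion, Set.mem_union, Set.mem_setOf_eq,
      not_exists, not_or, not_le, Finset.mem_singleton, Finset.mem_compl] at hω
    have hclose : ∀ i : Fin D,
        |((Finset.univ.filter (fun j => Y j ω = i)).card : ℝ) / N - p i| ≤ ε' := by
      intro i
      obtain ⟨h1, h2⟩ := hω i
      set m : ℝ := ((Finset.univ.filter (fun j => Y j ω = i)).card : ℝ) with hm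
      have e1 : ∑ j, (p i - if Y j ω = i then (1:ℝ) else 0) = (N:ℝ) * p i - m := by
        rw [Finset.sum_sub_distrib, Finset.sum_const, Finset.card_univ, Fintype.card_fin,
          nsmul_eq_mul, Finset.sum_boole]
      have hcardle : (Finset.univ.filter (fun j => Y j ω = i)).card ≤ N := by
        calc (Finset.univ.filter (fun j => Y j ω = i)).card
            ≤ (Finset.univ : Finset (Fin N)).card := Finset.card_filter_le _ _
          _ = N := by rw [Finset.card_univ, Fintype.card_fin]
      have hcardeq := Finset.card_filter_add_card_filter_not
        (s := (Finset.univ : Finset (Fin N))) (p := fun j => Y j ω = i)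
      rw [Finset.card_univ, Fintype.card_fin] at hcardeq
      have e2 : ∑ j, ((1 - p i) - if ¬ Y j ω = i then (1:ℝ) else 0) = m - (N:ℝ) * p i := by
        rw [Finset.sum_sub_distrib, Finset.sum_const, Finset.card_univ, Fintype.card_fin,
          nsmul_eq_mul, Finset.sum_boole]
        have : ((Finset.univ.filter (fun j => ¬ Y j ω = i)).card : ℝ) = (N:ℝ) - m := by
          rw [hm]
          have hnat : (Finset.univ.filter (fun j => ¬ Y j ω = i)).card
              = N - (Finset.univ.filter (fun j => Y j ω = i)).card := by omega
          rw [hnat, Nat.cast_sub hcardle]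
        rw [this]
        ring
      rw [e1] at h1
      rw [e2] at h2
      rw [abs_le]
      have hdm : m / (N:ℝ) * (N:ℝ) = m := div_mul_cancel₀ m (ne_of_gt hNpos)
      constructor
      · nlinarith
      · nlinarith
    have hdet := det_topk hk hkD (Finset.powersetCard_nonempty.mpr (by simpa using hkD))
      p (fun i => ((Finset.univ.filter (fun j => Y j ω = i)).card : ℝ) / N) hsorted hclose
    have hfinal : (k:ℝ) * ε' ≤ 4 * Real.sqrt ((k : ℝ) ^ 2 * L / (2 * N)) := by
      have hk0 : (0:ℝ) ≤ k := Nat.cast_nonneg k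
      have hLHS : ((k:ℝ) * ε')^2 = 4 * ((k:ℝ)^2 * (L/N)) := by
        rw [hε'def, show ((k:ℝ) * (2*t))^2 = 4 * ((k:ℝ)^2 * t^2) by ring, ht2]
      have hRHS : (4 * Real.sqrt ((k : ℝ) ^ 2 * L / (2 * N)))^2
          = 16 * ((k:ℝ)^2 * L / (2*N)) := by
        rw [mul_pow, Real.sq_sqrt (by positivity)]
        norm_num
      have hle : ((k:ℝ) * ε')^2 ≤ (4 * Real.sqrt ((k : ℝ) ^ 2 * L / (2 * N)))^2 := by
        rw [hLHS, hRHS, show 16 * ((k:ℝ)^2 * L / (2*N)) = 8 * ((k:ℝ)^2 * (L/N)) by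
          field_simp; ring]
        have : (0:ℝ) ≤ (k:ℝ)^2 * (L/N) := by positivity
        linarith
      calc (k:ℝ) * ε' = Real.sqrt (((k:ℝ) * ε')^2) :=
              (Real.sqrt_sq (by positivity)).symm
        _ ≤ Real.sqrt ((4 * Real.sqrt ((k : ℝ) ^ 2 * L / (2 * N)))^2) :=
              Real.sqrt_le_sqrt hle
        _ = 4 * Real.sqrt ((k : ℝ) ^ 2 * L / (2 * N)) := Real.sqrt_sq (by positivity)
    exact Set.mem_setOf_eq ▸ le_trans hdet hfinal
  calc ENNReal.ofReal (1 - δ) = 1 - ENNReal.ofReal δ := by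
        rw [ENNReal.ofReal_sub 1 hδ.le, ENNReal.ofReal_one]
    _ ≤ 1 - ℙ Bad := tsub_le_tsub_left hBadLe 1
    _ = ℙ Badᶜ := by rw [measure_compl hBadMeas (measure_ne_top _ _), measure_univ]
    _ ≤ ℙ _ := measure_mono hsub
end
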